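/- Let P ⊆ ℝ², let G ⊆ P be a finite set of k ≥ 4 points such that every point w ∈ P satisfies |V(w) ∩ G| ≥ k − 1. Then there do not exist three closed half-planes H₁, H₂, H₃ ⊆ ℝ² with H₁ ∩ H₂ ∩ H₃ = ∅ and three points w₁, w₂, w₃ ∈ P with V(wᵢ) ⊆ Hᵢ for i = 1, 2, 3. -/
import Mathlib


open scoped RealInnerProductSpace

/-- Points of the Euclidean plane. -/
abbrev Pt := EuclideanSpace ℝ (Fin 2)

/-- Visibility region of `p` in `P`. -/
def Vis (P : Set Pt) (p : Pt) : Set Pt := {q ∈ P | segment ℝ p q ⊆ P}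

/-- The closed half-plane `{x : ⟨a, x⟩ ≤ b}`. -/
def HalfPlane (a : Pt) (b : ℝ) : Set Pt := {x | ⟪a, x⟫ ≤ b}

/-- If `G ⊆ P` is a set of `k ≥ 4` points such that every point of `P`
sees at least `k - 1` guards of `G`, then there are no three closed half-planes
`H₁, H₂, H₃` with empty common intersection and points `w₁, w₂, w₃ ∈ P` with
`V(wᵢ) ⊆ Hᵢ`. -/
theorem no_three_separating_halfplanes (P : Set Pt) (G : Finset Pt) (k : ℕ) (hk : 4 ≤ k)
    (hcard : G.card = k) (hG : ↑G ⊆ P)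
    (hcov : ∀ p ∈ P, k - 1 ≤ (Vis P p ∩ ↑G).ncard) :
    ¬ ∃ (a : Fin 3 → Pt) (b : Fin 3 → ℝ) (w : Fin 3 → Pt),
        (∀ i, a i ≠ 0) ∧
        (⋂ i, HalfPlane (a i) (b i)) = ∅ ∧
        (∀ i, w i ∈ P) ∧
        (∀ i, Vis P (w i) ⊆ HalfPlane (a i) (b i)) := by
  classical
  rintro ⟨a, b, w, -, hempty, hw, hVis⟩
  -- In each half-plane, at least k-1 guards
  set F : Fin 3 → Finset Pt := fun i => G.filter (fun g => g ∈ HalfPlane (a i) (b i)) with hF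
  have key : ∀ i, k - 1 ≤ (F i).card := by
    intro i
    have h1 := hcov (w i) (hw i)
    have hsub : Vis P (w i) ∩ ↑G ⊆ ↑(F i) := by
      rintro x ⟨hx1, hx2⟩
      simp only [hF, Finset.coe_filter, Set.mem_setOf_eq]
      exact ⟨hx2, hVis i hx1⟩
    calc k - 1 ≤ (Vis P (w i) ∩ ↑G).ncard := h1
      _ ≤ (↑(F i) : Set Pt).ncard := Set.ncard_le_ncard hsub (Finset.finite_toSet _)
      _ = (F i).card := Set.ncard_coe_finset _
  -- At most one guard misses each half-plane
  set M : Fin 3 → Finset Pt := fun i => G.filter (fun g => g ∉ HalfPlane (a i) (b i)) with hM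
  have miss : ∀ i, (M i).card ≤ 1 := by
    intro i
    have := Finset.card_filter_add_card_filter_not
      (s := G) (p := fun g => g ∈ HalfPlane (a i) (b i))
    have h1 := key i
    simp only [hF] at h1
    simp only [hM]
    omega
  -- Guards in all three half-planes
  set S : Finset Pt := G.filter (fun g => ∀ i, g ∈ HalfPlane (a i) (b i)) with hS
  have hcomp : G.filter (fun g => ¬ ∀ i, g ∈ HalfPlane (a i) (b i)) ⊆ M 0 ∪ M 1 ∪ M 2 := by
    intro g hg
    simp only [Finset.mem_filter] at hg
    obtain ⟨hgG, hgn⟩ := hg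
    push_neg at hgn
    obtain ⟨i, hi⟩ := hgn
    fin_cases i <;>
      simp [hM, Finset.mem_union, Finset.mem_filter, hgG, hi] <;> tauto
  have hcompcard : (G.filter (fun g => ¬ ∀ i, g ∈ HalfPlane (a i) (b i))).card ≤ 3 := by
    calc _ ≤ (M 0 ∪ M 1 ∪ M 2).card := Finset.card_le_card hcomp
      _ ≤ (M 0 ∪ M 1).card + (M 2).card := Finset.card_union_le _ _
      _ ≤ (M 0).card + (M 1).card + (M 2).card := by
          have := Finset.card_union_le (M 0) (M 1); omega
      _ ≤ 3 := by have := miss 0; have := miss 1; have := miss 2; omega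
  have hScard : 1 ≤ S.card := by
    have := Finset.card_filter_add_card_filter_not
      (s := G) (p := fun g => ∀ i, g ∈ HalfPlane (a i) (b i))
    simp only [hS]
    omega
  obtain ⟨g, hg⟩ := Finset.card_pos.mp hScard
  simp only [hS, Finset.mem_filter] at hg
  have : g ∈ ⋂ i, HalfPlane (a i) (b i) := Set.mem_iInter.mpr hg.2
  rw [hempty] at this
  exact this
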